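/- Let n ≥ 3 be an integer and let j be an integer with 3 ≤ j ≤ n. Then for every α ∈ I_{j,n}, the coefficient c_α^{(n)} is non-negative if j is even and non-positive if j is odd. -/
import Mathlib


open MvPolynomial

noncomputable section

/-- Linear extension to polynomials of a map defined on exponent vectors (monomials). -/
def extendMon (f : (ℕ →₀ ℕ) → MvPolynomial ℕ ℝ) (P : MvPolynomial ℕ ℝ) :
    MvPolynomial ℕ ℝ :=
  ∑ d ∈ P.support, P.coeff d • f d

/-- Action of `D₁` on the monomial with exponent vector `d`. -/
def D1mon (d : ℕ →₀ ℕ) : MvPolynomial ℕ ℝ :=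
  ∑ i ∈ d.support,
    (d i : ℝ) • monomial (d - Finsupp.single i 1 + Finsupp.single (i + 1) 1) (1 : ℝ)

/-- Action of `D₂` on the monomial with exponent vector `d`. -/
def D2mon (d : ℕ →₀ ℕ) : MvPolynomial ℕ ℝ :=
  ∑ i ∈ d.support,
    (d i : ℝ) • monomial (d - Finsupp.single i 1 + Finsupp.single (i + 2) 1) (1 : ℝ)

def D1op : MvPolynomial ℕ ℝ → MvPolynomial ℕ ℝ := extendMon D1mon

def D2op : MvPolynomial ℕ ℝ → MvPolynomial ℕ ℝ := extendMon D2mon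

/-- The operator `L = (D₁ ∘ D₁ - D₂)/2`. -/
def Lop (P : MvPolynomial ℕ ℝ) : MvPolynomial ℕ ℝ :=
  (1 / 2 : ℝ) • (D1op (D1op P) - D2op P)

/-- Action of `H` on the monomial with exponent vector `d`. -/
def Hmon (d : ℕ →₀ ℕ) : MvPolynomial ℕ ℝ :=
  (-(1 / 2) : ℝ) • ∑ i ∈ d.support, ∑ l ∈ Finset.Ico 1 i,
    ((d i : ℝ) * (i.choose l : ℝ)) •
      monomial (d - Finsupp.single i 1 + Finsupp.single (1 + l) 1
        + Finsupp.single (1 + i - l) 1) (1 : ℝ)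

def Hop : MvPolynomial ℕ ℝ → MvPolynomial ℕ ℝ := extendMon Hmon

/-- `A_n = -∑_{k=1}^{n-1} C(n,k) T_{1+k} T_{1+n-k} T_n`. -/
def Apoly (n : ℕ) : MvPolynomial ℕ ℝ :=
  - ∑ k ∈ Finset.Ico 1 n, (n.choose k : ℝ) • (X (1 + k) * X (1 + n - k) * X n)

/-- The polynomials `R_n`: `R_2 = 0` and `R_{n+1} = A_n + L(R_n) + H(R_n)` for `n ≥ 2`. -/
def Rpoly : ℕ → MvPolynomial ℕ ℝ
  | 0 => 0
  | 1 => 0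
  | 2 => 0
  | (n + 3) => Apoly (n + 2) + Lop (Rpoly (n + 2)) + Hop (Rpoly (n + 2))

/-- The monomial `T_α = T_{α₁} ⋯ T_{α_r}` attached to a tuple (multiset) `α`. -/
def Tmon (α : Multiset ℕ) : MvPolynomial ℕ ℝ := (α.map X).prod

/-- `c_α^{(n)}`: the coefficient of the monomial `T_α` in `R_n`. -/
def coeffR (n : ℕ) (α : Multiset ℕ) : ℝ :=
  MvPolynomial.coeff (Multiset.toFinsupp α) (Rpoly n)

/-- `l_{β,α}`: the coefficient of `T_α` in `L(T_β)`. -/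
def lcoef (β α : Multiset ℕ) : ℝ :=
  MvPolynomial.coeff (Multiset.toFinsupp α) (Lop (Tmon β))

/-- `h_{β,α}`: the coefficient of `T_α` in `H(T_β)`. -/
def hcoef (β α : Multiset ℕ) : ℝ :=
  MvPolynomial.coeff (Multiset.toFinsupp α) (Hop (Tmon β))

/-- `I_{r,n}`: partitions of `2n` of length `r` with parts between `2` and `n-1`. -/
def Ipart (r n : ℕ) : Finset (Multiset ℕ) :=
  ((Finset.univ : Finset (Nat.Partition (2 * n))).image Nat.Partition.parts).filter
    (fun m => Multiset.card m = r ∧ ∀ a ∈ m, 2 ≤ a ∧ a ≤ n - 1)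

/-- `I_n`: partitions of `2n` of length between `3` and `n`, parts between `2` and `n-1`. -/
def IpartAll (n : ℕ) : Finset (Multiset ℕ) :=
  ((Finset.univ : Finset (Nat.Partition (2 * n))).image Nat.Partition.parts).filter
    (fun m => 3 ≤ Multiset.card m ∧ Multiset.card m ≤ n ∧ ∀ a ∈ m, 2 ≤ a ∧ a ≤ n - 1)

/-- The polynomial `a_{n,k}`. -/
def ank (n k : ℕ) : MvPolynomial ℕ ℝ :=
  ∑ α ∈ (IpartAll (n + 1)).filter (fun α => (n - k) ∈ α ∧ ∀ a ∈ α, a ≤ n - k),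
    C (coeffR (n + 1) α) * Tmon (α.erase (n - k))

/-- The polynomial `a_n = a_{n,0} - c_{(n,n,2)}^{(n+1)} T_2 T_n`. -/
def aform (n : ℕ) : MvPolynomial ℕ ℝ :=
  ank n 0 - C (coeffR (n + 1) {n, n, 2}) * (X 2 * X n)

-- auxiliary development
namespace Stmt14

def deg (d : ℕ →₀ ℕ) : ℕ := d.sum fun _ v => v

lemma deg_add (a b : ℕ →₀ ℕ) : deg (a + b) = deg a + deg b := by
  simpa [deg] using Finsupp.sum_add_index' (fun _ => rfl) (fun _ _ _ => rfl)

lemma deg_single (i k : ℕ) : deg (Finsupp.single i k) = k := by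
  simp [deg, Finsupp.sum_single_index]

lemma deg_sub_add (d : ℕ →₀ ℕ) (i : ℕ) (hi : i ∈ d.support) (j : ℕ) :
    deg (d - Finsupp.single i 1 + Finsupp.single j 1) = deg d := by
  have h1 : Finsupp.single i 1 ≤ d := by
    rw [Finsupp.single_le_iff]
    have := Finsupp.mem_support_iff.mp hi; omega
  have h2 : (d - Finsupp.single i 1) + Finsupp.single i 1 = d := tsub_add_cancel_of_le h1
  have := congrArg deg h2
  rw [deg_add, deg_single] at this
  rw [deg_add, deg_single]
  omega

lemma coeff_extendMon (f : (ℕ →₀ ℕ) → MvPolynomial ℕ ℝ) (P : MvPolynomial ℕ ℝ) (e : ℕ →₀ ℕ) :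
    coeff e (extendMon f P) = ∑ d ∈ P.support, coeff d P * coeff e (f d) := by
  simp [extendMon, coeff_sum, coeff_smul, smul_eq_mul]

/-- indicator -/
def ind (a b : ℕ →₀ ℕ) : ℝ := if a = b then 1 else 0

lemma ind_nonneg (a b : ℕ →₀ ℕ) : 0 ≤ ind a b := by unfold ind; positivity

lemma coeff_D1mon (d e : ℕ →₀ ℕ) :
    coeff e (D1mon d) = ∑ i ∈ d.support,
      (d i : ℝ) * ind (d - Finsupp.single i 1 + Finsupp.single (i + 1) 1) e := by
  simp [D1mon, coeff_sum, coeff_smul, coeff_monomial, ind, smul_eq_mul]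

lemma coeff_D2mon (d e : ℕ →₀ ℕ) :
    coeff e (D2mon d) = ∑ i ∈ d.support,
      (d i : ℝ) * ind (d - Finsupp.single i 1 + Finsupp.single (i + 2) 1) e := by
  simp [D2mon, coeff_sum, coeff_smul, coeff_monomial, ind, smul_eq_mul]

lemma coeff_Hmon (d e : ℕ →₀ ℕ) :
    coeff e (Hmon d) = -(1/2) * ∑ i ∈ d.support, ∑ l ∈ Finset.Ico 1 i,
      ((d i : ℝ) * (i.choose l : ℝ)) *
        ind (d - Finsupp.single i 1 + Finsupp.single (1 + l) 1 + Finsupp.single (1 + i - l) 1) e := by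
  simp [Hmon, coeff_sum, coeff_smul, coeff_monomial, ind, smul_eq_mul]

lemma coeff_D1mon_nonneg (d e : ℕ →₀ ℕ) : 0 ≤ coeff e (D1mon d) := by
  rw [coeff_D1mon]
  exact Finset.sum_nonneg fun i _ => mul_nonneg (by positivity) (ind_nonneg _ _)

lemma coeff_D2mon_nonneg (d e : ℕ →₀ ℕ) : 0 ≤ coeff e (D2mon d) := by
  rw [coeff_D2mon]
  exact Finset.sum_nonneg fun i _ => mul_nonneg (by positivity) (ind_nonneg _ _)

lemma coeff_Hmon_nonpos (d e : ℕ →₀ ℕ) : coeff e (Hmon d) ≤ 0 := by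
  rw [coeff_Hmon]
  have : 0 ≤ ∑ i ∈ d.support, ∑ l ∈ Finset.Ico 1 i,
      ((d i : ℝ) * (i.choose l : ℝ)) *
        ind (d - Finsupp.single i 1 + Finsupp.single (1 + l) 1 + Finsupp.single (1 + i - l) 1) e :=
    Finset.sum_nonneg fun i _ => Finset.sum_nonneg fun l _ =>
      mul_nonneg (by positivity) (ind_nonneg _ _)
  nlinarith

lemma coeff_D1mon_deg (d e : ℕ →₀ ℕ) (h : coeff e (D1mon d) ≠ 0) : deg e = deg d := by
  rw [coeff_D1mon] at h
  obtain ⟨i, hi, hne⟩ := Finset.exists_ne_zero_of_sum_ne_zero h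
  have : ind (d - Finsupp.single i 1 + Finsupp.single (i + 1) 1) e ≠ 0 := by
    intro h0; rw [h0, mul_zero] at hne; exact hne rfl
  unfold ind at this
  split at this
  · next heq => rw [← heq, deg_sub_add d i hi]
  · exact absurd rfl this

lemma coeff_D2mon_deg (d e : ℕ →₀ ℕ) (h : coeff e (D2mon d) ≠ 0) : deg e = deg d := by
  rw [coeff_D2mon] at h
  obtain ⟨i, hi, hne⟩ := Finset.exists_ne_zero_of_sum_ne_zero h
  have : ind (d - Finsupp.single i 1 + Finsupp.single (i + 2) 1) e ≠ 0 := by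
    intro h0; rw [h0, mul_zero] at hne; exact hne rfl
  unfold ind at this
  split at this
  · next heq => rw [← heq, deg_sub_add d i hi]
  · exact absurd rfl this

lemma coeff_Hmon_deg (d e : ℕ →₀ ℕ) (h : coeff e (Hmon d) ≠ 0) : deg e = deg d + 1 := by
  rw [coeff_Hmon] at h
  have h2 : (∑ i ∈ d.support, ∑ l ∈ Finset.Ico 1 i,
      ((d i : ℝ) * (i.choose l : ℝ)) *
        ind (d - Finsupp.single i 1 + Finsupp.single (1 + l) 1 + Finsupp.single (1 + i - l) 1) e) ≠ 0 := by
    intro h0; rw [h0, mul_zero] at h; exact h rfl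
  obtain ⟨i, hi, hne⟩ := Finset.exists_ne_zero_of_sum_ne_zero h2
  obtain ⟨l, hl, hne2⟩ := Finset.exists_ne_zero_of_sum_ne_zero hne
  have : ind (d - Finsupp.single i 1 + Finsupp.single (1 + l) 1 + Finsupp.single (1 + i - l) 1) e ≠ 0 := by
    intro h0; rw [h0, mul_zero] at hne2; exact hne2 rfl
  unfold ind at this
  split at this
  · next heq =>
      rw [← heq, deg_add, deg_single, deg_sub_add d i hi]
  · exact absurd rfl this

lemma mem_support_D1mon (d : ℕ →₀ ℕ) (i : ℕ) (hi : i ∈ d.support) :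
    d - Finsupp.single i 1 + Finsupp.single (i + 1) 1 ∈ (D1mon d).support := by
  rw [MvPolynomial.mem_support_iff, coeff_D1mon]
  have hpos : (0:ℝ) < ∑ i' ∈ d.support, (d i' : ℝ) *
      ind (d - Finsupp.single i' 1 + Finsupp.single (i' + 1) 1)
        (d - Finsupp.single i 1 + Finsupp.single (i + 1) 1) := by
    have hterm : (0:ℝ) < (d i : ℝ) *
        ind (d - Finsupp.single i 1 + Finsupp.single (i + 1) 1)
          (d - Finsupp.single i 1 + Finsupp.single (i + 1) 1) := by
      have := Finsupp.mem_support_iff.mp hi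
      simp [ind]
      omega
    exact lt_of_lt_of_le hterm (Finset.single_le_sum
      (f := fun i' => (d i' : ℝ) *
        ind (d - Finsupp.single i' 1 + Finsupp.single (i' + 1) 1)
          (d - Finsupp.single i 1 + Finsupp.single (i + 1) 1))
      (fun i' _ => mul_nonneg (by positivity) (ind_nonneg _ _)) hi)
  exact ne_of_gt hpos

lemma coeff_D1op_D1mon (d e : ℕ →₀ ℕ) :
    coeff e (D1op (D1mon d)) = ∑ i ∈ d.support,
      (d i : ℝ) * coeff e (D1mon (d - Finsupp.single i 1 + Finsupp.single (i + 1) 1)) := by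
  rw [show D1op = extendMon D1mon from rfl, coeff_extendMon]
  have : ∀ d' ∈ (D1mon d).support,
      coeff d' (D1mon d) * coeff e (D1mon d')
      = ∑ i ∈ d.support, (d i : ℝ) * (ind (d - Finsupp.single i 1 + Finsupp.single (i + 1) 1) d'
          * coeff e (D1mon d')) := by
    intro d' _
    rw [coeff_D1mon, Finset.sum_mul]
    exact Finset.sum_congr rfl fun i _ => by ring
  rw [Finset.sum_congr rfl this, Finset.sum_comm]
  refine Finset.sum_congr rfl fun i hi => ?_
  rw [← Finset.mul_sum]
  congr 1
  have : ∀ d' ∈ (D1mon d).support,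
      ind (d - Finsupp.single i 1 + Finsupp.single (i + 1) 1) d' * coeff e (D1mon d')
      = if (d - Finsupp.single i 1 + Finsupp.single (i + 1) 1) = d'
          then coeff e (D1mon d') else 0 := by
    intro d' _
    by_cases h : (d - Finsupp.single i 1 + Finsupp.single (i + 1) 1) = d' <;> simp [ind, h]
  rw [Finset.sum_congr rfl this, Finset.sum_ite_eq, if_pos (mem_support_D1mon d i hi)]

lemma coeff_D1op_D1mon_nonneg (d e : ℕ →₀ ℕ) : 0 ≤ coeff e (D1op (D1mon d)) := by
  rw [coeff_D1op_D1mon]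
  exact Finset.sum_nonneg fun i _ => mul_nonneg (by positivity) (coeff_D1mon_nonneg _ _)

lemma coeff_D1op_D1mon_deg (d e : ℕ →₀ ℕ) (h : coeff e (D1op (D1mon d)) ≠ 0) :
    deg e = deg d := by
  rw [coeff_D1op_D1mon] at h
  obtain ⟨i, hi, hne⟩ := Finset.exists_ne_zero_of_sum_ne_zero h
  have h2 : coeff e (D1mon (d - Finsupp.single i 1 + Finsupp.single (i + 1) 1)) ≠ 0 := by
    intro h0; rw [h0, mul_zero] at hne; exact hne rfl
  rw [coeff_D1mon_deg _ _ h2, deg_sub_add d i hi]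

lemma D2_le_D1sq (d e : ℕ →₀ ℕ) : coeff e (D2mon d) ≤ coeff e (D1op (D1mon d)) := by
  rw [coeff_D2mon, coeff_D1op_D1mon]
  refine Finset.sum_le_sum fun i hi => ?_
  refine mul_le_mul_of_nonneg_left ?_ (by positivity)
  set b := d - Finsupp.single i 1 + Finsupp.single (i + 1) 1 with hb
  have hb1 : 1 ≤ b (i + 1) := by
    simp [hb, Finsupp.add_apply]
  have hmem : i + 1 ∈ b.support := Finsupp.mem_support_iff.mpr (by omega)
  have key : b - Finsupp.single (i+1) 1 + Finsupp.single (i+1+1) 1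
      = d - Finsupp.single i 1 + Finsupp.single (i + 2) 1 := by
    rw [hb, add_tsub_cancel_right]
  have step1 : ind (d - Finsupp.single i 1 + Finsupp.single (i + 2) 1) e
      ≤ (b (i+1) : ℝ) * ind (b - Finsupp.single (i+1) 1 + Finsupp.single (i+1+1) 1) e := by
    rw [key]
    have h1 : (1:ℝ) ≤ (b (i+1) : ℝ) := by exact_mod_cast hb1
    nlinarith [ind_nonneg (d - Finsupp.single i 1 + Finsupp.single (i + 2) 1) e]
  refine le_trans step1 ?_
  rw [coeff_D1mon]
  exact Finset.single_le_sum
    (f := fun i' => (b i' : ℝ) * ind (b - Finsupp.single i' 1 + Finsupp.single (i' + 1) 1) e)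
    (fun i' _ => mul_nonneg (by positivity) (ind_nonneg _ _)) hmem

lemma coeff_D1op_D1op (P : MvPolynomial ℕ ℝ) (e : ℕ →₀ ℕ) :
    coeff e (D1op (D1op P)) = ∑ d ∈ P.support, coeff d P * coeff e (D1op (D1mon d)) := by
  classical
  set S := (D1op P).support ∪ P.support.biUnion (fun d => (D1mon d).support) with hS
  have h1 : coeff e (D1op (D1op P)) = ∑ d' ∈ S, coeff d' (D1op P) * coeff e (D1mon d') := by
    rw [show D1op (D1op P) = extendMon D1mon (D1op P) from rfl, coeff_extendMon]
    refine Finset.sum_subset Finset.subset_union_left ?_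
    intro d' _ hd'
    rw [MvPolynomial.notMem_support_iff.mp hd', zero_mul]
  rw [h1]
  have h2 : ∀ d' ∈ S, coeff d' (D1op P) * coeff e (D1mon d')
      = ∑ d ∈ P.support, coeff d P * (coeff d' (D1mon d) * coeff e (D1mon d')) := by
    intro d' _
    rw [show D1op P = extendMon D1mon P from rfl, coeff_extendMon, Finset.sum_mul]
    exact Finset.sum_congr rfl fun d _ => by ring
  rw [Finset.sum_congr rfl h2, Finset.sum_comm]
  refine Finset.sum_congr rfl fun d hd => ?_
  rw [← Finset.mul_sum]
  congr 1
  rw [show D1op (D1mon d) = extendMon D1mon (D1mon d) from rfl, coeff_extendMon]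
  symm
  refine Finset.sum_subset ?_ ?_
  · intro d' hd'
    exact Finset.mem_union_right _ (Finset.mem_biUnion.mpr ⟨d, hd, hd'⟩)
  · intro d' _ hd'
    rw [MvPolynomial.notMem_support_iff.mp hd', zero_mul]

/-- The sign invariant. -/
def Good (P : MvPolynomial ℕ ℝ) : Prop := ∀ e, 0 ≤ (-1 : ℝ) ^ (deg e) * coeff e P

lemma Good.add {P Q : MvPolynomial ℕ ℝ} (hP : Good P) (hQ : Good Q) : Good (P + Q) := by
  intro e
  have := hP e
  have := hQ e
  rw [coeff_add]
  nlinarith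

lemma Good.zero : Good (0 : MvPolynomial ℕ ℝ) := by intro e; simp

lemma good_Lop {P : MvPolynomial ℕ ℝ} (hP : Good P) : Good (Lop P) := by
  intro e
  have hcoeff : coeff e (Lop P) = (1/2 : ℝ) *
      ∑ d ∈ P.support, coeff d P * (coeff e (D1op (D1mon d)) - coeff e (D2mon d)) := by
    rw [Lop, coeff_smul, coeff_sub, coeff_D1op_D1op,
      show D2op P = extendMon D2mon P from rfl, coeff_extendMon, smul_eq_mul,
      ← Finset.sum_sub_distrib]
    congr 1
    exact Finset.sum_congr rfl fun d _ => by ring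
  rw [hcoeff]
  have : (-1:ℝ) ^ deg e * ((1/2 : ℝ) *
      ∑ d ∈ P.support, coeff d P * (coeff e (D1op (D1mon d)) - coeff e (D2mon d)))
      = (1/2 : ℝ) * ∑ d ∈ P.support,
        ((-1:ℝ) ^ deg e * coeff d P) * (coeff e (D1op (D1mon d)) - coeff e (D2mon d)) := by
    rw [Finset.mul_sum, Finset.mul_sum, Finset.mul_sum]
    rw [← Finset.sum_congr rfl (fun d _ => by ring :
      ∀ d ∈ P.support, (-1:ℝ) ^ deg e * ((1/2:ℝ) *
        (coeff d P * (coeff e (D1op (D1mon d)) - coeff e (D2mon d))))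
      = (1/2:ℝ) * (((-1:ℝ) ^ deg e * coeff d P)
        * (coeff e (D1op (D1mon d)) - coeff e (D2mon d))))]
  rw [this]
  refine mul_nonneg (by norm_num) (Finset.sum_nonneg fun d _ => ?_)
  have hw : 0 ≤ coeff e (D1op (D1mon d)) - coeff e (D2mon d) :=
    sub_nonneg.mpr (D2_le_D1sq d e)
  by_cases hdeg : deg e = deg d
  · refine mul_nonneg ?_ hw
    rw [hdeg]
    exact hP d
  · have h1 : coeff e (D1op (D1mon d)) = 0 := by
      by_contra h; exact hdeg (coeff_D1op_D1mon_deg d e h)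
    have h2 : coeff e (D2mon d) = 0 := by
      by_contra h; exact hdeg (coeff_D2mon_deg d e h)
    rw [h1, h2]
    simp

lemma good_Hop {P : MvPolynomial ℕ ℝ} (hP : Good P) : Good (Hop P) := by
  intro e
  rw [show Hop P = extendMon Hmon P from rfl, coeff_extendMon, Finset.mul_sum]
  refine Finset.sum_nonneg fun d _ => ?_
  by_cases hdeg : deg e = deg d + 1
  · have h1 : 0 ≤ (-1:ℝ) ^ deg d * coeff d P := hP d
    have h2 : coeff e (Hmon d) ≤ 0 := coeff_Hmon_nonpos d e
    rw [hdeg, pow_succ]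
    nlinarith
  · have h1 : coeff e (Hmon d) = 0 := by
      by_contra h; exact hdeg (coeff_Hmon_deg d e h)
    rw [h1]
    simp

lemma coeff_Apoly (n : ℕ) (e : ℕ →₀ ℕ) :
    coeff e (Apoly n) = -∑ k ∈ Finset.Ico 1 n, (n.choose k : ℝ) *
      ind (Finsupp.single (1+k) 1 + Finsupp.single (1+n-k) 1 + Finsupp.single n 1) e := by
  have hX : ∀ a b c : ℕ, (X a * X b * X c : MvPolynomial ℕ ℝ)
      = monomial (Finsupp.single a 1 + Finsupp.single b 1 + Finsupp.single c 1) 1 := by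
    intro a b c
    rw [X, X, X, monomial_mul, monomial_mul]
    norm_num
  simp only [Apoly, coeff_neg, coeff_sum, coeff_smul, hX, coeff_monomial, ind, smul_eq_mul,
    mul_one]

lemma good_Apoly (n : ℕ) : Good (Apoly n) := by
  intro e
  rw [coeff_Apoly]
  set S := ∑ k ∈ Finset.Ico 1 n, (n.choose k : ℝ) *
      ind (Finsupp.single (1+k) 1 + Finsupp.single (1+n-k) 1 + Finsupp.single n 1) e with hS
  have hSnn : 0 ≤ S :=
    Finset.sum_nonneg fun k _ => mul_nonneg (by positivity) (ind_nonneg _ _)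
  by_cases h0 : S = 0
  · rw [h0]; simp
  · have hdeg : deg e = 3 := by
      obtain ⟨k, hk, hne⟩ := Finset.exists_ne_zero_of_sum_ne_zero h0
      have : ind (Finsupp.single (1+k) 1 + Finsupp.single (1+n-k) 1 + Finsupp.single n 1) e ≠ 0 := by
        intro hz; rw [hz, mul_zero] at hne; exact hne rfl
      unfold ind at this
      split at this
      · next heq => rw [← heq, deg_add, deg_add, deg_single, deg_single, deg_single]
      · exact absurd rfl this
    rw [hdeg]
    norm_num
    linarith

lemma good_R : ∀ n, Good (Rpoly n)
  | 0 => Good.zero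
  | 1 => Good.zero
  | 2 => Good.zero
  | (n+3) => by
      rw [show Rpoly (n+3) = Apoly (n + 2) + Lop (Rpoly (n + 2)) + Hop (Rpoly (n + 2)) from rfl]
      exact Good.add (Good.add (good_Apoly (n+2)) (good_Lop (good_R (n+2))))
        (good_Hop (good_R (n+2)))

lemma deg_toFinsupp (α : Multiset ℕ) : deg (Multiset.toFinsupp α) = Multiset.card α := by
  have h1 : (Multiset.toFinsupp α).toMultiset = α := by
    simp
  have h2 := Finsupp.card_toMultiset (Multiset.toFinsupp α)
  rw [h1] at h2
  rw [h2]
  rfl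

end Stmt14



/-- Sign of the coefficients of `R_n`: for `α ∈ I_{j,n}`, the coefficient `c_α^{(n)}` is
non-negative if `j` is even, non-positive if `j` is odd. -/
theorem statement14 (n : ℕ) (hn : 3 ≤ n) (j : ℕ) (hj1 : 3 ≤ j) (hj2 : j ≤ n)
    (α : Multiset ℕ) (hα : α ∈ Ipart j n) :
    (Even j → 0 ≤ coeffR n α) ∧ (Odd j → coeffR n α ≤ 0) := by
  have hcard : Multiset.card α = j := by
    rw [Ipart, Finset.mem_filter] at hα
    exact hα.2.1
  have hgood := Stmt14.good_R n (Multiset.toFinsupp α)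
  rw [Stmt14.deg_toFinsupp, hcard] at hgood
  have hc : coeffR n α = coeff (Multiset.toFinsupp α) (Rpoly n) := rfl
  constructor
  · intro hj
    rw [hj.neg_one_pow, one_mul] at hgood
    rw [hc]; exact hgood
  · intro hj
    rw [hj.neg_one_pow, neg_one_mul, le_neg, neg_zero] at hgood
    rw [hc]; exact hgood

end
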